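/- arXiv:1601.07114 — 5 statements merged into one kernel-verified Lean document; each statement's English description precedes it below -/
import Mathlib

section
/- Let A be a 2×2 real matrix equal to the Jordan block [[1,1],[0,1]], and let α be an irrational real number. Let Γ = ℤ(0,1) + ℤ(1,α) ⊂ ℝ². Then sup over negative integers j of the number of points of Γ inside A^j(B(0,r)) is infinite, for any r > 0 large enough that B(0,r) contains the unit square; in particular the lattice counting estimate #(Γ ∩ A^j B(0,r)) ≤ C·max(1,|det A|^j) fails for (A,Γ). -/
open Matrix Set

noncomputable section

/-- The points of the lattice `Γ = ℤ(0,1) + ℤ(1,α) ⊂ ℝ²`. -/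
def latticeAlpha (α : ℝ) : Set (EuclideanSpace ℝ (Fin 2)) :=
  {x | ∃ m k : ℤ, x = (m : ℝ) • (WithLp.equiv 2 (Fin 2 → ℝ)).symm ![0, 1] +
      (k : ℝ) • (WithLp.equiv 2 (Fin 2 → ℝ)).symm ![1, α]}

section aux

lemma jordanAux_mul (a b : ℝ) :
    (!![1,a;0,1] : Matrix (Fin 2) (Fin 2) ℝ) * !![1,b;0,1] = !![1,a+b;0,1] := by
  ext i j; fin_cases i <;> fin_cases j <;>
    simp [Matrix.mul_apply, Fin.sum_univ_two] <;> ring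

lemma jordanAux_pow (n : ℕ) :
    (!![1,1;0,1] : Matrix (Fin 2) (Fin 2) ℝ) ^ n = !![1,(n:ℝ);0,1] := by
  induction n with
  | zero => simp [Matrix.one_fin_two]
  | succ k ih => rw [pow_succ, ih, jordanAux_mul]; norm_num

lemma jordanAux_coe_zpow (A : Matrix.GeneralLinearGroup (Fin 2) ℝ)
    (hA : (A : Matrix (Fin 2) (Fin 2) ℝ) = !![1, 1; 0, 1]) (j : ℤ) :
    ((A ^ j : Matrix.GeneralLinearGroup (Fin 2) ℝ) : Matrix (Fin 2) (Fin 2) ℝ)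
      = !![1,(j:ℝ);0,1] := by
  have hnat : ∀ n : ℕ, ((A ^ (n:ℤ) : Matrix.GeneralLinearGroup (Fin 2) ℝ) :
      Matrix (Fin 2) (Fin 2) ℝ) = !![1,(n:ℝ);0,1] := by
    intro n
    rw [zpow_natCast]
    have : ((A ^ n : Matrix.GeneralLinearGroup (Fin 2) ℝ) : Matrix (Fin 2) (Fin 2) ℝ)
        = ((A : Matrix (Fin 2) (Fin 2) ℝ)) ^ n := Units.val_pow_eq_pow_val A n
    rw [this, hA, jordanAux_pow]
  obtain ⟨n, rfl | rfl⟩ := j.eq_nat_or_neg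
  · exact hnat n
  · have h1 : ((A ^ (-(n:ℤ)) : Matrix.GeneralLinearGroup (Fin 2) ℝ) :
        Matrix (Fin 2) (Fin 2) ℝ) * !![1,(n:ℝ);0,1] = 1 := by
      rw [← hnat n, ← Units.val_mul, ← _root_.zpow_add]
      simp
    have h2 : ((A ^ (-(n:ℤ)) : Matrix.GeneralLinearGroup (Fin 2) ℝ) :
        Matrix (Fin 2) (Fin 2) ℝ) = !![1,-(n:ℝ);0,1] := by
      calc ((A ^ (-(n:ℤ)) : Matrix.GeneralLinearGroup (Fin 2) ℝ) :
            Matrix (Fin 2) (Fin 2) ℝ)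
          = ((A ^ (-(n:ℤ)) : Matrix.GeneralLinearGroup (Fin 2) ℝ) :
            Matrix (Fin 2) (Fin 2) ℝ) * (!![1,(n:ℝ);0,1] * !![1,-(n:ℝ);0,1]) := by
            rw [jordanAux_mul, add_neg_cancel, ← Matrix.one_fin_two, mul_one]
        _ = !![1,-(n:ℝ);0,1] := by rw [← mul_assoc, h1, one_mul]
    rw [h2]; norm_num

lemma jordanAux_ext (u v : EuclideanSpace ℝ (Fin 2)) (h0 : u 0 = v 0) (h1 : u 1 = v 1) :
    u = v := by
  ext i; fin_cases i <;> assumption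

lemma jordanAux_coord_le_norm (x : EuclideanSpace ℝ (Fin 2)) (i : Fin 2) : |x i| ≤ ‖x‖ := by
  rw [EuclideanSpace.norm_eq]
  calc |x i| = Real.sqrt (‖x i‖^2) := by
        rw [Real.sqrt_sq_eq_abs, Real.norm_eq_abs, abs_abs]
    _ ≤ _ := Real.sqrt_le_sqrt (Finset.single_le_sum (f := fun j => ‖x j‖^2)
        (fun j _ => sq_nonneg _) (Finset.mem_univ i))

lemma jordanAux_apply (c : ℝ) (v : EuclideanSpace ℝ (Fin 2)) :
    Matrix.toEuclideanLin !![1,c;0,1] v 0 = v 0 + c * v 1 ∧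
    Matrix.toEuclideanLin !![1,c;0,1] v 1 = v 1 := by
  constructor <;>
    simp [Matrix.toEuclideanLin_apply, Matrix.mulVec, dotProduct, Fin.sum_univ_two,
      WithLp.equiv_symm_apply, WithLp.equiv_apply, Matrix.vecHead, Matrix.vecTail]

lemma jordanAux_lattice_coords (α : ℝ) (m k : ℤ) :
    ((m : ℝ) • (WithLp.equiv 2 (Fin 2 → ℝ)).symm ![0, 1] +
      (k : ℝ) • (WithLp.equiv 2 (Fin 2 → ℝ)).symm ![1, α]) 0 = k ∧
    ((m : ℝ) • (WithLp.equiv 2 (Fin 2 → ℝ)).symm ![0, 1] +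
      (k : ℝ) • (WithLp.equiv 2 (Fin 2 → ℝ)).symm ![1, α]) 1 = m + k * α := by
  constructor <;>
    simp [WithLp.equiv_symm_apply, PiLp.add_apply, PiLp.smul_apply, smul_eq_mul]

lemma jordanAux_symm_coords (a b : ℝ) :
    ((WithLp.equiv 2 (Fin 2 → ℝ)).symm ![a, b] : EuclideanSpace ℝ (Fin 2)) 0 = a ∧
    ((WithLp.equiv 2 (Fin 2 → ℝ)).symm ![a, b] : EuclideanSpace ℝ (Fin 2)) 1 = b := by
  constructor <;> simp [WithLp.equiv_symm_apply]

lemma jordanAux_exists_neg_small (α : ℝ) (hα : Irrational α) (N : ℕ) :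
    ∃ q p : ℤ, 0 < q ∧ (q:ℝ) * α - p < 0 ∧ -(1/(N+1)) < (q:ℝ) * α - p := by
  obtain ⟨j, k, hk0, hkn, hjk⟩ := Real.exists_int_int_abs_mul_sub_le α (n := N + 1)
    (Nat.succ_pos N)
  set β : ℝ := (k:ℝ) * α - j with hβ
  have hβne : β ≠ 0 := by
    have : Irrational ((k:ℝ) * α) := hα.intCast_mul hk0.ne'
    intro h
    exact (this.ne_int j) (by linarith)
  have hβsmall : |β| ≤ 1/((N:ℝ)+2) := by
    push_cast at hjk
    rw [show ((N:ℝ)+2) = (N:ℝ)+1+1 by ring]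
    exact hjk
  have hlt : (1:ℝ)/((N:ℝ)+2) < 1/((N:ℝ)+1) := by
    apply one_div_lt_one_div_of_lt
    · positivity
    · linarith
  rcases lt_or_gt_of_ne hβne with hneg | hpos
  · refine ⟨k, j, hk0, hneg, ?_⟩
    have h := abs_le.mp hβsmall
    push_cast
    linarith [h.1]
  · have hβ1 : β ≤ 1 := by
      have h := abs_le.mp hβsmall
      have h2 : (1:ℝ)/((N:ℝ)+2) ≤ 1 := by
        rw [div_le_one (by positivity)]
        linarith [Nat.cast_nonneg (α := ℝ) N]
      linarith [h.2]
    set s : ℤ := ⌊1/β⌋ with hs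
    have hs1 : 1 ≤ s := by
      rw [hs, Int.le_floor]
      push_cast
      rw [le_div_iff₀ hpos]
      linarith
    have hsle : (s:ℝ) ≤ 1/β := Int.floor_le _
    have hsgt : 1/β - 1 < (s:ℝ) := by
      have := Int.lt_floor_add_one (1/β)
      linarith
    have hinv : (1/β) * β = 1 := by field_simp
    have hexp : (s:ℝ)*β - 1 = (s:ℝ)*(k:ℝ)*α - ((s:ℝ)*(j:ℝ)+1) := by rw [hβ]; ring
    have h2 : 1 - β < (s:ℝ) * β := by
      nlinarith [mul_lt_mul_of_pos_right hsgt hpos, hinv]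
    have h1 : (s:ℝ) * β ≤ 1 := by
      nlinarith [mul_le_mul_of_nonneg_right hsle hpos.le, hinv]
    have hne1 : (s:ℝ) * β ≠ 1 := by
      intro h
      have hirr : Irrational ((s * k : ℤ) * α) := hα.intCast_mul (by positivity)
      apply hirr.ne_int (s * j + 1)
      push_cast
      rw [hβ] at h
      nlinarith
    have hlt1 : (s:ℝ) * β < 1 := lt_of_le_of_ne h1 hne1
    refine ⟨s * k, s * j + 1, mul_pos hs1 hk0, ?_, ?_⟩
    · push_cast
      linarith [hexp, hlt1]
    · have hβb : β ≤ 1/((N:ℝ)+2) := (abs_le.mp hβsmall).2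
      push_cast
      linarith [hexp, h2, hlt, hβb]

lemma jordanAux_finite (α c r : ℝ) :
    (latticeAlpha α ∩ Matrix.toEuclideanLin !![1,c;0,1] ''
      Metric.ball (0 : EuclideanSpace ℝ (Fin 2)) r).Finite := by
  set B1 : ℤ := ⌈r*(1+|c|)⌉ with hB1
  set B2 : ℤ := ⌈r + r*(1+|c|)*|α|⌉ with hB2
  apply Set.Finite.subset (Set.Finite.image
    (fun pr : ℤ × ℤ => (pr.1:ℝ) • (WithLp.equiv 2 (Fin 2 → ℝ)).symm ![0,1] +
      (pr.2:ℝ) • (WithLp.equiv 2 (Fin 2 → ℝ)).symm ![1,α])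
    ((Set.finite_Icc (-B2) B2).prod (Set.finite_Icc (-B1) B1)))
  rintro x ⟨⟨m, k, rfl⟩, y, hy, hxy⟩
  have hyn : ‖y‖ < r := by rwa [Metric.mem_ball, dist_zero_right] at hy
  have hy0 : |y 0| < r := lt_of_le_of_lt (jordanAux_coord_le_norm y 0) hyn
  have hy1 : |y 1| < r := lt_of_le_of_lt (jordanAux_coord_le_norm y 1) hyn
  have hL := jordanAux_apply c y
  have hC := jordanAux_lattice_coords α m k
  have hx0 : (k:ℝ) = y 0 + c * y 1 := by rw [← hC.1, ← hxy, hL.1]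
  have hx1 : (m:ℝ) + k * α = y 1 := by rw [← hC.2, ← hxy, hL.2]
  have hkabs : |(k:ℝ)| ≤ r*(1+|c|) := by
    rw [hx0]
    calc |y 0 + c * y 1| ≤ |y 0| + |c| * |y 1| := by
          rw [← abs_mul]; exact abs_add_le _ _
      _ ≤ r*(1+|c|) := by nlinarith [abs_nonneg c, abs_nonneg (y 0), abs_nonneg (y 1)]
  have hmabs : |(m:ℝ)| ≤ r + r*(1+|c|)*|α| := by
    have : (m:ℝ) = y 1 - k * α := by linarith
    rw [this]
    calc |y 1 - (k:ℝ) * α| ≤ |y 1| + |(k:ℝ)| * |α| := by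
          rw [← abs_mul]; exact abs_sub _ _
      _ ≤ r + r*(1+|c|)*|α| := by nlinarith [abs_nonneg α, abs_nonneg (y 1)]
  refine ⟨(m, k), ⟨?_, ?_⟩, rfl⟩
  · have h1 : |(m:ℝ)| ≤ (B2:ℝ) := hmabs.trans (Int.le_ceil _)
    rw [← Int.cast_abs] at h1
    have : |m| ≤ B2 := by exact_mod_cast h1
    simpa [Set.mem_Icc] using abs_le.mp this
  · have h1 : |(k:ℝ)| ≤ (B1:ℝ) := hkabs.trans (Int.le_ceil _)
    rw [← Int.cast_abs] at h1
    have : |k| ≤ B1 := by exact_mod_cast h1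
    simpa [Set.mem_Icc] using abs_le.mp this

lemma jordanAux_key (α : ℝ) (hα : Irrational α) (r : ℝ)
    (hsq : ∀ x : EuclideanSpace ℝ (Fin 2), (∀ i, x i ∈ Set.Icc (0:ℝ) 1) →
      x ∈ Metric.ball (0 : EuclideanSpace ℝ (Fin 2)) r) (N : ℕ) :
    ∃ j : ℤ, j < 0 ∧ N ≤ (latticeAlpha α ∩ Matrix.toEuclideanLin !![1,(j:ℝ);0,1] ''
      Metric.ball (0 : EuclideanSpace ℝ (Fin 2)) r).ncard := by
  obtain ⟨q, p, hq, hδ0, hδ1⟩ := jordanAux_exists_neg_small α hα N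
  set δ : ℝ := (q:ℝ)*α - p with hδ
  have hδpos : 0 < -δ := by linarith
  have hqR : (0:ℝ) < q := by exact_mod_cast hq
  set n : ℤ := ⌈(q:ℝ)/(-δ)⌉ with hn
  have hn1 : 1 ≤ n := Int.ceil_pos.mpr (by positivity)
  have hnle : (q:ℝ)/(-δ) ≤ n := Int.le_ceil _
  have hnlt : (n:ℝ) < (q:ℝ)/(-δ) + 1 := Int.ceil_lt_add_one _
  have key1 : 0 ≤ -(q:ℝ) - n*δ := by
    have := (div_le_iff₀ hδpos).mp hnle
    nlinarith
  have key2 : -(q:ℝ) - n*δ ≤ -δ := by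
    have h : ((n:ℝ) - 1) * (-δ) < q := by
      have h2 : (n:ℝ) - 1 < (q:ℝ)/(-δ) := by linarith
      exact (lt_div_iff₀ hδpos).mp h2
    nlinarith
  have hδsmall : -δ < 1/((N:ℝ)+1) := by
    rw [hδ]; push_cast at hδ1 ⊢; linarith
  classical
  refine ⟨-n, by omega, ?_⟩
  set f : ℕ → EuclideanSpace ℝ (Fin 2) := fun s =>
    (((s:ℤ)*p : ℤ):ℝ) • (WithLp.equiv 2 (Fin 2 → ℝ)).symm ![0,1] +
    ((-(s:ℤ)*q : ℤ):ℝ) • (WithLp.equiv 2 (Fin 2 → ℝ)).symm ![1,α] with hf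
  have hfinj : Function.Injective f := by
    intro a b h
    have h0 := congrArg (fun v : EuclideanSpace ℝ (Fin 2) => v 0) h
    simp only [hf] at h0
    rw [(jordanAux_lattice_coords α ((a:ℤ)*p) (-(a:ℤ)*q)).1,
      (jordanAux_lattice_coords α ((b:ℤ)*p) (-(b:ℤ)*q)).1] at h0
    have h0' : -(a:ℤ)*q = -(b:ℤ)*q := by exact_mod_cast h0
    have h0'' : -(a:ℤ) = -(b:ℤ) := mul_right_cancel₀ hq.ne' h0'
    have : (a:ℤ) = b := by omega
    exact_mod_cast this
  have hmem : ∀ s : ℕ, s ≤ N → f s ∈ latticeAlpha α ∩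
      Matrix.toEuclideanLin !![1,((-n:ℤ):ℝ);0,1] ''
        Metric.ball (0 : EuclideanSpace ℝ (Fin 2)) r := by
    intro s hsN
    have hsN' : (s:ℝ) ≤ N := by exact_mod_cast hsN
    have hs0 : (0:ℝ) ≤ s := Nat.cast_nonneg s
    have hsδ : (s:ℝ) * (-δ) ≤ 1 := by
      have h1 : (s:ℝ) * (-δ) ≤ (N:ℝ) * (-δ) := by nlinarith
      have h2 : (N:ℝ) * (-δ) ≤ (N:ℝ) * (1/((N:ℝ)+1)) := by nlinarith
      have h3 : (N:ℝ) * (1/((N:ℝ)+1)) ≤ 1 := by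
        rw [mul_one_div, div_le_one (by positivity)]
        linarith
      exact (h1.trans h2).trans h3
    constructor
    · exact ⟨(s:ℤ)*p, -(s:ℤ)*q, rfl⟩
    · refine ⟨(WithLp.equiv 2 (Fin 2 → ℝ)).symm ![ (s:ℝ)*(-(q:ℝ) - n*δ), (s:ℝ)*(-δ) ], ?_, ?_⟩
      · apply hsq
        have hc := jordanAux_symm_coords ((s:ℝ)*(-(q:ℝ) - n*δ)) ((s:ℝ)*(-δ))
        rw [Fin.forall_fin_two, hc.1, hc.2]
        refine ⟨⟨mul_nonneg hs0 key1, ?_⟩, ⟨mul_nonneg hs0 hδpos.le, hsδ⟩⟩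
        nlinarith
      · have hyc := jordanAux_symm_coords ((s:ℝ)*(-(q:ℝ) - n*δ)) ((s:ℝ)*(-δ))
        have hLy := jordanAux_apply ((-n:ℤ):ℝ)
          ((WithLp.equiv 2 (Fin 2 → ℝ)).symm ![ (s:ℝ)*(-(q:ℝ) - n*δ), (s:ℝ)*(-δ) ])
        have hfc := jordanAux_lattice_coords α ((s:ℤ)*p) (-(s:ℤ)*q)
        apply jordanAux_ext
        · rw [hLy.1]
          simp only [hf]
          rw [hfc.1, hyc.1, hyc.2]
          push_cast
          ring
        · rw [hLy.2]
          simp only [hf]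
          rw [hfc.2, hyc.2, hδ]
          push_cast
          ring
  set T : Finset (EuclideanSpace ℝ (Fin 2)) := (Finset.range (N+1)).image f with hT
  have hTcard : T.card = N + 1 := by
    rw [hT, Finset.card_image_of_injective _ hfinj, Finset.card_range]
  have hTsub : (T : Set (EuclideanSpace ℝ (Fin 2))) ⊆
      latticeAlpha α ∩ Matrix.toEuclideanLin !![1,((-n:ℤ):ℝ);0,1] ''
        Metric.ball (0 : EuclideanSpace ℝ (Fin 2)) r := by
    intro x hx
    simp only [hT, Finset.coe_image, Finset.coe_range, Set.mem_image, Set.mem_Iio] at hx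
    obtain ⟨s, hs, rfl⟩ := hx
    exact hmem s (by omega)
  calc (N : ℕ) ≤ N + 1 := Nat.le_succ N
    _ = T.card := hTcard.symm
    _ = (T : Set (EuclideanSpace ℝ (Fin 2))).ncard := (Set.ncard_coe_finset T).symm
    _ ≤ _ := Set.ncard_le_ncard hTsub (by
        have := jordanAux_finite α ((-n:ℤ):ℝ) r
        simpa using this)

end aux

/-- Let `A` be (the invertible matrix given by) the Jordan block `[[1,1],[0,1]]` and
`α` irrational, `Γ = ℤ(0,1) + ℤ(1,α)`. If `r > 0` is large enough that `B(0,r)` contains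
the unit square, then `sup_{j<0} #(Γ ∩ A^j(B(0,r))) = ∞`; in particular the lattice
counting estimate `#(Γ ∩ A^j B(0,r)) ≤ C max(1,|det A|^j)` fails for `(A,Γ)`. -/
theorem jordan_block_fails_lattice_counting
    (A : Matrix.GeneralLinearGroup (Fin 2) ℝ)
    (hA : (A : Matrix (Fin 2) (Fin 2) ℝ) = !![1, 1; 0, 1])
    (α : ℝ) (hα : Irrational α) (r : ℝ) (hr : 0 < r)
    (hsq : ∀ x : EuclideanSpace ℝ (Fin 2), (∀ i, x i ∈ Set.Icc (0:ℝ) 1) →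
      x ∈ Metric.ball (0 : EuclideanSpace ℝ (Fin 2)) r) :
    (∀ N : ℕ, ∃ j : ℤ, j < 0 ∧
      N ≤ (latticeAlpha α ∩
        Matrix.toEuclideanLin ((A ^ j : Matrix.GeneralLinearGroup (Fin 2) ℝ) :
          Matrix (Fin 2) (Fin 2) ℝ) '' Metric.ball 0 r).ncard) ∧
    ¬ ∃ C : ℝ, 0 < C ∧ ∀ j : ℤ,
      ((latticeAlpha α ∩
        Matrix.toEuclideanLin ((A ^ j : Matrix.GeneralLinearGroup (Fin 2) ℝ) :
          Matrix (Fin 2) (Fin 2) ℝ) '' Metric.ball 0 r).ncard : ℝ) ≤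
        C * max 1 (|Matrix.det (A : Matrix (Fin 2) (Fin 2) ℝ)| ^ j) := by
  have hpart1 : ∀ N : ℕ, ∃ j : ℤ, j < 0 ∧
      N ≤ (latticeAlpha α ∩
        Matrix.toEuclideanLin ((A ^ j : Matrix.GeneralLinearGroup (Fin 2) ℝ) :
          Matrix (Fin 2) (Fin 2) ℝ) '' Metric.ball 0 r).ncard := by
    intro N
    obtain ⟨j, hj, hcard⟩ := jordanAux_key α hα r hsq N
    exact ⟨j, hj, by rwa [jordanAux_coe_zpow A hA j]⟩
  refine ⟨hpart1, ?_⟩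
  rintro ⟨C, hC, hb⟩
  have hdet : Matrix.det (A : Matrix (Fin 2) (Fin 2) ℝ) = 1 := by
    rw [hA, Matrix.det_fin_two_of]; norm_num
  obtain ⟨j, _, hcard⟩ := hpart1 (⌈C⌉₊ + 1)
  have hbj := hb j
  rw [hdet] at hbj
  simp only [abs_one, _root_.one_zpow, max_self, mul_one] at hbj
  have h1 : ((⌈C⌉₊ + 1 : ℕ) : ℝ) ≤ C := le_trans (Nat.cast_le.mpr hcard) hbj
  have h2 : C ≤ (⌈C⌉₊ : ℝ) := Nat.le_ceil C
  push_cast at h1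
  linarith

end
end

section
/- Let B ∈ GL(n,ℝ) be an orthogonal matrix and ψ ∈ L²(ℝⁿ). Then the Calderón formula ∑_{j∈ℤ} |ψ̂(B^{-j}ξ)|² = 1 for a.e. ξ ∈ ℝⁿ cannot hold. -/
open Matrix Set MeasureTheory

noncomputable section

def glAct {n : ℕ} (A : Matrix.GeneralLinearGroup (Fin n) ℝ) :
    EuclideanSpace ℝ (Fin n) →ₗ[ℝ] EuclideanSpace ℝ (Fin n) :=
  Matrix.toEuclideanLin (A : Matrix (Fin n) (Fin n) ℝ)

section aux
variable {n : ℕ}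

lemma toEuclideanLin_mul' (M N : Matrix (Fin n) (Fin n) ℝ) (x : EuclideanSpace ℝ (Fin n)) :
    Matrix.toEuclideanLin (M * N) x = Matrix.toEuclideanLin M (Matrix.toEuclideanLin N x) := by
  simp [Matrix.toEuclideanLin_apply, Matrix.mulVec_mulVec]

lemma toEuclideanLin_one' (x : EuclideanSpace ℝ (Fin n)) :
    Matrix.toEuclideanLin (1 : Matrix (Fin n) (Fin n) ℝ) x = x := by
  simp [Matrix.toEuclideanLin_apply]

lemma norm_toEuclideanLin (M : Matrix (Fin n) (Fin n) ℝ) (hM : Mᵀ * M = 1)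
    (x : EuclideanSpace ℝ (Fin n)) : ‖Matrix.toEuclideanLin M x‖ = ‖x‖ := by
  have h1 : (inner ℝ (Matrix.toEuclideanLin M x) (Matrix.toEuclideanLin M x) : ℝ)
      = inner ℝ x x := by
    rw [← LinearMap.adjoint_inner_right, ← Matrix.toEuclideanLin_conjTranspose_eq_adjoint,
      Matrix.conjTranspose_eq_transpose_of_trivial, ← toEuclideanLin_mul', hM,
      toEuclideanLin_one']
  rw [real_inner_self_eq_norm_sq, real_inner_self_eq_norm_sq] at h1
  calc ‖Matrix.toEuclideanLin M x‖ = √(‖Matrix.toEuclideanLin M x‖ ^ 2) :=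
        (Real.sqrt_sq (norm_nonneg _)).symm
    _ = √(‖x‖ ^ 2) := by rw [h1]
    _ = ‖x‖ := Real.sqrt_sq (norm_nonneg _)

lemma unitary_zpow (B : Matrix.GeneralLinearGroup (Fin n) ℝ)
    (hB : (B : Matrix (Fin n) (Fin n) ℝ) ∈ unitary (Matrix (Fin n) (Fin n) ℝ)) (j : ℤ) :
    ((B ^ j : Matrix.GeneralLinearGroup (Fin n) ℝ) : Matrix (Fin n) (Fin n) ℝ)
      ∈ unitary (Matrix (Fin n) (Fin n) ℝ) := by
  have hinv : ∀ u : Matrix.GeneralLinearGroup (Fin n) ℝ,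
      ((u : Matrix (Fin n) (Fin n) ℝ) ∈ unitary _) →
      ((u⁻¹ : Matrix.GeneralLinearGroup (Fin n) ℝ) : Matrix (Fin n) (Fin n) ℝ) ∈ unitary _ := by
    intro u hu
    have h1 : ((u⁻¹ : Matrix.GeneralLinearGroup (Fin n) ℝ) : Matrix (Fin n) (Fin n) ℝ)
        = star (u : Matrix (Fin n) (Fin n) ℝ) := by
      calc ((u⁻¹ : Matrix.GeneralLinearGroup (Fin n) ℝ) : Matrix (Fin n) (Fin n) ℝ)
          = ↑u⁻¹ * ((u : Matrix (Fin n) (Fin n) ℝ) * star (u : Matrix (Fin n) (Fin n) ℝ)) := by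
            rw [(Unitary.mem_iff.mp hu).2, mul_one]
        _ = star (u : Matrix (Fin n) (Fin n) ℝ) := by rw [← mul_assoc, Units.inv_mul, one_mul]
    rw [h1]
    exact Unitary.star_mem hu
  induction j using Int.induction_on with
  | zero => simpa using (one_mem (unitary (Matrix (Fin n) (Fin n) ℝ)))
  | succ k ih =>
      rw [_root_.zpow_add_one, Units.val_mul]
      exact mul_mem ih hB
  | pred k ih =>
      rw [_root_.zpow_sub_one, Units.val_mul]
      exact mul_mem ih (hinv B hB)

end aux

/-- If `B` is an orthogonal matrix, then the Calderón formula
`∑_{j∈ℤ} |ψ̂(B^{-j}ξ)|² = 1` for a.e. `ξ` cannot hold for any `ψ ∈ L²(ℝⁿ)`.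
(By Plancherel, `ψ ∈ L²` corresponds exactly to `ψ̂ =: g ∈ L²`, so the statement
is phrased in terms of the Fourier transform `g` of `ψ`.) -/
theorem calderon_fails_for_orthogonal {n : ℕ}
    (B : Matrix.GeneralLinearGroup (Fin n) ℝ)
    (hB : (B : Matrix (Fin n) (Fin n) ℝ)ᵀ * (B : Matrix (Fin n) (Fin n) ℝ) = 1)
    (g : EuclideanSpace ℝ (Fin n) → ℂ) (hg : MemLp g 2 (volume : Measure (EuclideanSpace ℝ (Fin n)))) :
    ¬ (∀ᵐ ξ : EuclideanSpace ℝ (Fin n) ∂(volume : Measure (EuclideanSpace ℝ (Fin n))),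
        ∑' j : ℤ, ‖g (glAct (B ^ (-j)) ξ)‖ ^ 2 = 1) := by
  intro h
  -- B is unitary
  have hmemB : (B : Matrix (Fin n) (Fin n) ℝ) ∈ unitary (Matrix (Fin n) (Fin n) ℝ) := by
    rw [Unitary.mem_iff, Matrix.star_eq_conjTranspose,
      Matrix.conjTranspose_eq_transpose_of_trivial]
    exact ⟨hB, mul_eq_one_comm.mp hB⟩
  -- linear isometry equivalences
  have hnorm : ∀ j : ℤ, ∀ x : EuclideanSpace ℝ (Fin n), ‖glAct (B ^ j) x‖ = ‖x‖ := by
    intro j x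
    refine norm_toEuclideanLin _ ?_ x
    have := (Unitary.mem_iff.mp (unitary_zpow B hmemB j)).1
    rwa [Matrix.star_eq_conjTranspose, Matrix.conjTranspose_eq_transpose_of_trivial] at this
  have hcomp : ∀ (j k : ℤ) (x : EuclideanSpace ℝ (Fin n)),
      glAct (B ^ j) (glAct (B ^ k) x) = glAct (B ^ (j + k)) x := by
    intro j k x
    rw [_root_.zpow_add]
    show _ = Matrix.toEuclideanLin (((B ^ j : GL (Fin n) ℝ) : Matrix (Fin n) (Fin n) ℝ)
      * ((B ^ k : GL (Fin n) ℝ) : Matrix (Fin n) (Fin n) ℝ)) x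
    rw [toEuclideanLin_mul']
    rfl
  have hid : ∀ x : EuclideanSpace ℝ (Fin n), glAct (B ^ (0 : ℤ)) x = x := by
    intro x
    show Matrix.toEuclideanLin ((B ^ (0:ℤ) : GL (Fin n) ℝ) : Matrix (Fin n) (Fin n) ℝ) x = x
    rw [zpow_zero, Units.val_one]
    exact toEuclideanLin_one' x
  let e : ℤ → (EuclideanSpace ℝ (Fin n) ≃ₗᵢ[ℝ] EuclideanSpace ℝ (Fin n)) := fun j =>
    { toLinearEquiv := LinearEquiv.ofLinear (glAct (B ^ (-j))) (glAct (B ^ j))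
        (LinearMap.ext fun x => by
          simp only [LinearMap.comp_apply, LinearMap.id_apply, hcomp, neg_add_cancel, hid])
        (LinearMap.ext fun x => by
          simp only [LinearMap.comp_apply, LinearMap.id_apply, hcomp, add_neg_cancel, hid])
      norm_map' := hnorm (-j) }
  have he : ∀ (j : ℤ) (x : EuclideanSpace ℝ (Fin n)), e j x = glAct (B ^ (-j)) x :=
    fun _ _ => rfl
  -- measurable version of g
  set sm := hg.aestronglyMeasurable with hsm
  set g' : EuclideanSpace ℝ (Fin n) → ℂ := sm.mk g with hg'def
  have hg'meas : Measurable g' := sm.stronglyMeasurable_mk.measurable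
  have heq : g =ᵐ[volume] g' := sm.ae_eq_mk
  have heqj : ∀ j : ℤ, ∀ᵐ ξ : EuclideanSpace ℝ (Fin n) ∂volume,
      g (e j ξ) = g' (e j ξ) := by
    intro j
    have hmap : volume.map (e j) = volume := (e j).measurePreserving.map_eq
    exact ae_eq_comp (e j).measurePreserving.aemeasurable (by rwa [hmap])
  have hae : ∀ᵐ ξ : EuclideanSpace ℝ (Fin n) ∂volume,
      ∑' j : ℤ, ‖g' (e j ξ)‖ ^ 2 = 1 := by
    filter_upwards [h, ae_all_iff.mpr heqj] with ξ h1 h2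
    rw [← h1]
    refine tsum_congr fun j => ?_
    have h3 := h2 j
    rw [← h3, he j ξ]
  set f : EuclideanSpace ℝ (Fin n) → ENNReal := fun ξ => ENNReal.ofReal (‖g' ξ‖ ^ 2) with hfdef
  have hfmeas : Measurable f := (hg'meas.norm.pow_const 2).ennreal_ofReal
  have haeE : ∀ᵐ ξ : EuclideanSpace ℝ (Fin n) ∂volume,
      ∑' j : ℤ, f (e j ξ) = (1 : ENNReal) := by
    filter_upwards [hae] with ξ hξ
    have hs : Summable fun j : ℤ => ‖g' (e j ξ)‖ ^ 2 := by
      by_contra hs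
      rw [tsum_eq_zero_of_not_summable hs] at hξ
      norm_num at hξ
    calc ∑' j : ℤ, f (e j ξ)
        = ENNReal.ofReal (∑' j : ℤ, ‖g' (e j ξ)‖ ^ 2) :=
          (ENNReal.ofReal_tsum_of_nonneg (fun j => by positivity) hs).symm
      _ = 1 := by rw [hξ, ENNReal.ofReal_one]
  set E := Metric.ball (0 : EuclideanSpace ℝ (Fin n)) 1 with hEdef
  have hEmeas : MeasurableSet E := measurableSet_ball
  have hEpos : 0 < volume E := Metric.measure_ball_pos volume 0 one_pos
  have hEfin : volume E < ⊤ := measure_ball_lt_top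
  have hpre : ∀ j : ℤ, (e j) ⁻¹' E = E := by
    intro j
    rw [hEdef, (e j).preimage_ball 0 1, map_zero]
  have hint : ∀ j : ℤ, ∫⁻ ξ in E, f (e j ξ) ∂volume = ∫⁻ ξ in E, f ξ ∂volume := by
    intro j
    have hmp := (e j).measurePreserving.restrict_preimage hEmeas
    rw [hpre j] at hmp
    exact hmp.lintegral_comp hfmeas
  have key : volume E = ∑' _j : ℤ, ∫⁻ ξ in E, f ξ ∂volume := by
    calc volume E = ∫⁻ _ξ in E, (1 : ENNReal) ∂volume := by rw [setLIntegral_one]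
      _ = ∫⁻ ξ in E, ∑' j : ℤ, f (e j ξ) ∂volume :=
          lintegral_congr_ae ((ae_restrict_of_ae haeE).mono fun ξ hξ => hξ.symm)
      _ = ∑' j : ℤ, ∫⁻ ξ in E, f (e j ξ) ∂volume :=
          lintegral_tsum fun j => (hfmeas.comp (e j).continuous.measurable).aemeasurable
      _ = ∑' _j : ℤ, ∫⁻ ξ in E, f ξ ∂volume := tsum_congr hint
  rcases eq_or_ne (∫⁻ ξ in E, f ξ ∂volume) 0 with hc | hc
  · rw [hc, tsum_zero] at key
    exact hEpos.ne' key
  · rw [ENNReal.tsum_const_eq_top_of_ne_zero hc] at key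
    exact hEfin.ne key

end
end

section
/- Let B ∈ GL(n,ℝ) be not orthogonal with |det B| = 1, and suppose S ⊂ ℝⁿ is a multiplicative tiling set for B. If there exists ψ ∈ L²(ℝⁿ) with ∑_{j∈ℤ}|ψ̂(B^{-j}ξ)|² = 1 a.e., then the Lebesgue measure of S equals ‖ψ‖²; in particular S has finite measure. -/
open Matrix Set MeasureTheory
open scoped ENNReal NNReal

noncomputable section

def IsMultTiling {n : ℕ} (B : Matrix.GeneralLinearGroup (Fin n) ℝ)
    (S : Set (EuclideanSpace ℝ (Fin n))) : Prop :=
  volume (Set.univ \ ⋃ j : ℤ, glAct (B ^ j) '' S) = 0 ∧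
  ∀ i j : ℤ, i ≠ j → volume ((glAct (B ^ i) '' S) ∩ (glAct (B ^ j) '' S)) = 0

lemma det_toEuclideanLin_aux {n : ℕ} (M : Matrix (Fin n) (Fin n) ℝ) :
    LinearMap.det (Matrix.toEuclideanLin M) = M.det := by
  let e : (Fin n → ℝ) ≃ₗ[ℝ] EuclideanSpace ℝ (Fin n) :=
    (WithLp.linearEquiv 2 ℝ (Fin n → ℝ)).symm
  have h : Matrix.toEuclideanLin M
      = (e : (Fin n → ℝ) →ₗ[ℝ] EuclideanSpace ℝ (Fin n)) ∘ₗ (Matrix.toLin' M) ∘ₗ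
        (e.symm : EuclideanSpace ℝ (Fin n) →ₗ[ℝ] (Fin n → ℝ)) := rfl
  rw [h, LinearMap.det_conj, LinearMap.det_toLin']

/-- Let `B` be non-orthogonal with `|det B| = 1` and `S` a multiplicative tiling set for
`B`. If some `ψ ∈ L²` satisfies `∑_{j∈ℤ}|ψ̂(B^{-j}ξ)|² = 1` a.e., then `|S| = ‖ψ‖²`;
in particular `S` has finite measure. (By Plancherel, `ψ̂ =: g` ranges exactly over `L²`
and `‖ψ‖² = ‖g‖² = ∫ |g|²`.) -/
theorem measure_tiling_eq_norm_sq {n : ℕ}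
    (B : Matrix.GeneralLinearGroup (Fin n) ℝ)
    (horth : (B : Matrix (Fin n) (Fin n) ℝ)ᵀ * (B : Matrix (Fin n) (Fin n) ℝ) ≠ 1)
    (hdet : |Matrix.det (B : Matrix (Fin n) (Fin n) ℝ)| = 1)
    (S : Set (EuclideanSpace ℝ (Fin n))) (hSm : MeasurableSet S)
    (htile : IsMultTiling B S)
    (g : EuclideanSpace ℝ (Fin n) → ℂ)
    (hg : MemLp g 2 (volume : Measure (EuclideanSpace ℝ (Fin n))))
    (hcald : ∀ᵐ ξ : EuclideanSpace ℝ (Fin n) ∂(volume : Measure (EuclideanSpace ℝ (Fin n))),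
      ∑' j : ℤ, ‖g (glAct (B ^ (-j)) ξ)‖ ^ 2 = 1) :
    volume S = ENNReal.ofReal (∫ ξ : EuclideanSpace ℝ (Fin n), ‖g ξ‖ ^ 2) ∧
      volume S < ⊤ := by
  classical
  set F : EuclideanSpace ℝ (Fin n) → ℝ≥0∞ := fun ξ => (‖g ξ‖₊ : ℝ≥0∞) ^ (2 : ℕ) with hF
  -- determinant of glAct (B ^ j)
  have hdetj : ∀ j : ℤ, |LinearMap.det (glAct (B ^ j))| = 1 := by
    intro j
    have h1 : LinearMap.det (glAct (B ^ j))
        = Matrix.det ((B ^ j : Matrix.GeneralLinearGroup (Fin n) ℝ) : Matrix (Fin n) (Fin n) ℝ) :=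
      det_toEuclideanLin_aux _
    have h2 : Matrix.det ((B ^ j : Matrix.GeneralLinearGroup (Fin n) ℝ) : Matrix (Fin n) (Fin n) ℝ)
        = (Matrix.det (B : Matrix (Fin n) (Fin n) ℝ)) ^ j := by
      have := map_zpow ((Matrix.detMonoidHom).comp (Units.coeHom (Matrix (Fin n) (Fin n) ℝ))) B j
      simpa using this
    rw [h1, h2,
      show |Matrix.det (B : Matrix (Fin n) (Fin n) ℝ) ^ j|
          = |Matrix.det (B : Matrix (Fin n) (Fin n) ℝ)| ^ j from
        map_zpow₀ (absHom : ℝ →*₀ ℝ) _ j,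
      hdet, _root_.one_zpow]
  have hdetne : ∀ j : ℤ, LinearMap.det (glAct (B ^ j)) ≠ 0 := by
    intro j h
    have hj := hdetj j
    rw [h, abs_zero] at hj
    exact zero_ne_one hj
  -- measure preserving
  have hmp : ∀ j : ℤ, MeasurePreserving (glAct (B ^ j))
      (volume : Measure (EuclideanSpace ℝ (Fin n))) (volume : Measure (EuclideanSpace ℝ (Fin n))) := by
    intro j
    refine ⟨(glAct (B ^ j)).continuous_of_finiteDimensional.measurable, ?_⟩
    rw [Measure.map_linearMap_addHaar_eq_smul_addHaar _ (hdetne j), abs_inv, hdetj j]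
    simp
  have hemb : ∀ j : ℤ, MeasurableEmbedding (glAct (B ^ j)) := by
    intro j
    have h := ((glAct (B ^ j)).equivOfDetNeZero
      (hdetne j)).toContinuousLinearEquiv.toHomeomorph.measurableEmbedding
    exact h
  have himg : ∀ j : ℤ, MeasurableSet (glAct (B ^ j) '' S) :=
    fun j => (hemb j).measurableSet_image.2 hSm
  -- a.e. measurability of each summand
  have hgm : AEMeasurable g (volume : Measure (EuclideanSpace ℝ (Fin n))) := hg.1.aemeasurable
  have hmeas : ∀ j : ℤ, AEMeasurable (fun η => F (glAct (B ^ j) η))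
      ((volume : Measure (EuclideanSpace ℝ (Fin n))).restrict S) := by
    intro j
    have h1 : AEMeasurable (fun η => g (glAct (B ^ j) η)) (volume : Measure (EuclideanSpace ℝ (Fin n))) :=
      hgm.comp_quasiMeasurePreserving (hmp j).quasiMeasurePreserving
    exact (h1.enorm.pow_const 2).mono_measure Measure.restrict_le_self
  -- main computation
  have key : volume S = ∫⁻ ξ, F ξ := by
    have hae : (⋃ j : ℤ, glAct (B ^ j) '' S) =ᵐ[volume] (univ : Set (EuclideanSpace ℝ (Fin n))) := by
      rw [ae_eq_univ, compl_eq_univ_diff]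
      exact htile.1
    calc volume S = ∫⁻ _ in S, (1 : ℝ≥0∞) := (setLIntegral_one S).symm
      _ = ∫⁻ η in S, ∑' j : ℤ, F (glAct (B ^ j) η) := by
          refine lintegral_congr_ae (ae_restrict_of_ae ?_)
          filter_upwards [hcald] with ξ hξ
          have hsum : Summable (fun j : ℤ => ‖g (glAct (B ^ (-j)) ξ)‖ ^ 2) := by
            by_contra h
            rw [tsum_eq_zero_of_not_summable h] at hξ
            norm_num at hξ
          calc (1 : ℝ≥0∞) = ENNReal.ofReal (∑' j : ℤ, ‖g (glAct (B ^ (-j)) ξ)‖ ^ 2) := by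
                rw [hξ, ENNReal.ofReal_one]
            _ = ∑' j : ℤ, ENNReal.ofReal (‖g (glAct (B ^ (-j)) ξ)‖ ^ 2) :=
                ENNReal.ofReal_tsum_of_nonneg (fun j => by positivity) hsum
            _ = ∑' j : ℤ, F (glAct (B ^ (-j)) ξ) := by
                refine tsum_congr fun j => ?_
                rw [hF]
                rw [ENNReal.ofReal_pow (norm_nonneg _), ofReal_norm, enorm_eq_nnnorm]
            _ = ∑' j : ℤ, F (glAct (B ^ j) ξ) :=
                (Equiv.neg ℤ).tsum_eq (fun j => F (glAct (B ^ j) ξ))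
      _ = ∑' j : ℤ, ∫⁻ η in S, F (glAct (B ^ j) η) := lintegral_tsum hmeas
      _ = ∑' j : ℤ, ∫⁻ ξ in glAct (B ^ j) '' S, F ξ := by
          refine tsum_congr fun j => ?_
          exact (hmp j).setLIntegral_comp_emb (hemb j) F S
      _ = ∫⁻ ξ in ⋃ j : ℤ, glAct (B ^ j) '' S, F ξ :=
          (lintegral_iUnion₀ (fun j => (himg j).nullMeasurableSet)
            (fun i j hij => htile.2 i j hij) F).symm
      _ = ∫⁻ ξ in (univ : Set (EuclideanSpace ℝ (Fin n))), F ξ := setLIntegral_congr hae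
      _ = ∫⁻ ξ, F ξ := setLIntegral_univ F
  -- finiteness
  have hfin : (∫⁻ ξ, F ξ) < ⊤ := by
    have h := lintegral_rpow_enorm_lt_top_of_eLpNorm_lt_top
      (f := g) (p := 2) (by norm_num) (by norm_num) hg.2
    have heq : ∀ x : ℝ≥0∞, x ^ ((2 : ℝ≥0∞).toReal) = x ^ (2 : ℕ) := by
      intro x
      rw [← ENNReal.rpow_natCast]
      norm_num
    simpa only [heq, enorm_eq_nnnorm] using h
  -- identify the Bochner integral
  have hint : Integrable (fun ξ => ‖g ξ‖ ^ 2) (volume : Measure (EuclideanSpace ℝ (Fin n))) := by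
    have h := hg.integrable_norm_rpow (by norm_num) (by norm_num)
    have heq : ∀ x : ℝ, 0 ≤ x → x ^ ((2 : ℝ≥0∞).toReal) = x ^ (2 : ℕ) := by
      intro x hx
      rw [← Real.rpow_natCast]
      norm_num
    refine h.congr (ae_of_all _ fun ξ => ?_)
    exact heq _ (norm_nonneg _)
  have hofReal : ENNReal.ofReal (∫ ξ, ‖g ξ‖ ^ 2) = ∫⁻ ξ, F ξ := by
    rw [ofReal_integral_eq_lintegral_ofReal hint (ae_of_all _ fun ξ => by positivity)]
    refine lintegral_congr fun ξ => ?_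
    rw [hF, ENNReal.ofReal_pow (norm_nonneg _), ofReal_norm, enorm_eq_nnnorm]
  exact ⟨key.trans hofReal.symm, key ▸ hfin⟩

end
end

section
/- Let B ∈ GL(n,ℝ) with |det B| > 1, let F be the real span of generalized eigenspaces of B with eigenvalues of modulus > 1, E the complementary B-invariant subspace (eigenvalues of modulus ≤ 1), and T ⊂ Q(p,q,s) = {x_E + x_F : |x_E| < p, s < |x_F| < q} for some p,q,s > 0. Then there exists K ∈ ℕ such that for every ξ ∈ ℝⁿ, the number of integers j with B^{-j}ξ ∈ T is at most K (i.e., every B-orbit {B^j ξ}_{j∈ℤ} hits Q(p,q,s) at most K times). -/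
open Matrix Set Filter Topology

noncomputable section

def genEigSpanReal {n : ℕ} (B : Matrix (Fin n) (Fin n) ℝ) (pred : ℂ → Prop) :
    Submodule ℝ (EuclideanSpace ℝ (Fin n)) :=
  Submodule.span ℝ {x : EuclideanSpace ℝ (Fin n) |
    ∃ μ : ℂ, pred μ ∧
      ∃ v ∈ Module.End.maxGenEigenspace (Matrix.toLin' (B.map ((↑) : ℝ → ℂ))) μ,
        (∀ i, x i = (v i).re) ∨ (∀ i, x i = (v i).im)}

def Qset {n : ℕ} (E F : Submodule ℝ (EuclideanSpace ℝ (Fin n))) (p q s : ℝ) :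
    Set (EuclideanSpace ℝ (Fin n)) :=
  {x | ∃ xE ∈ E, ∃ xF ∈ F, x = xE + xF ∧ ‖xE‖ < p ∧ s < ‖xF‖ ∧ ‖xF‖ < q}

lemma aux_real_decay (r : ℝ) (hr0 : 0 ≤ r) (hr1 : r < 1) (u b : ℕ → ℝ)
    (hu : ∀ m, 0 ≤ u m) (hrec : ∀ m, u (m + 1) ≤ r * u m + b m)
    (hb : Tendsto b atTop (𝓝 0)) : Tendsto u atTop (𝓝 0) := by
  rw [Metric.tendsto_atTop]
  intro ε hε
  have hhalf : 0 < (1 - r) * (ε / 2) := by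
    have : 0 < 1 - r := by linarith
    positivity
  obtain ⟨M, hM⟩ := (Metric.tendsto_atTop.1 hb) _ hhalf
  have key : ∀ k, u (M + k) ≤ r ^ k * u M + ε / 2 := by
    intro k
    induction k with
    | zero => simp [hu M]; nlinarith [hu M]
    | succ k ih =>
      have hb' : b (M + k) ≤ (1 - r) * (ε / 2) := by
        have := hM (M + k) (Nat.le_add_right _ _)
        rw [Real.dist_eq, sub_zero] at this
        exact (abs_le.1 this.le).2
      have := hrec (M + k)
      have : u (M + k + 1) ≤ r * (r ^ k * u M + ε / 2) + (1 - r) * (ε / 2) := by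
        nlinarith [hrec (M + k), mul_le_mul_of_nonneg_left ih hr0]
      calc u (M + (k + 1)) = u (M + k + 1) := by ring_nf
        _ ≤ r * (r ^ k * u M + ε / 2) + (1 - r) * (ε / 2) := this
        _ ≤ r ^ (k + 1) * u M + ε / 2 := by ring_nf; nlinarith [pow_nonneg hr0 k, hu M]
  have hpow : Tendsto (fun k => r ^ k * u M) atTop (𝓝 0) := by
    simpa using (tendsto_pow_atTop_nhds_zero_of_lt_one hr0 hr1).mul_const (u M)
  obtain ⟨K, hK⟩ := (Metric.tendsto_atTop.1 hpow) (ε / 2) (by positivity)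
  refine ⟨M + K, fun m hm => ?_⟩
  have h1 : u m ≤ r ^ (m - M) * u M + ε / 2 := by
    have := key (m - M)
    rwa [Nat.add_sub_cancel' (by omega)] at this
  have h2 : r ^ (m - M) * u M < ε / 2 := by
    have := hK (m - M) (by omega)
    rw [Real.dist_eq, sub_zero] at this
    calc r ^ (m - M) * u M ≤ |r ^ (m - M) * u M| := le_abs_self _
      _ < ε / 2 := this
  rw [Real.dist_eq, sub_zero, abs_of_nonneg (hu m)]
  linarith

lemma aux_disjoint_biSup {R N ι : Type*} [Ring R] [AddCommGroup N] [Module R N]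
    {p : ι → Submodule R N} (h : iSupIndep p) (ps pt : ι → Prop)
    (hst : ∀ i, ps i → pt i → False) :
    Disjoint (⨆ i, ⨆ (_ : ps i), p i) (⨆ i, ⨆ (_ : pt i), p i) := by
  classical
  rw [Submodule.disjoint_def]
  intro x hxs hxt
  obtain ⟨f, hf⟩ := (Submodule.mem_biSup_iff_exists_dfinsupp ps p x).1 hxs
  obtain ⟨g, hg⟩ := (Submodule.mem_biSup_iff_exists_dfinsupp pt p x).1 hxt
  have hinj := h.dfinsupp_lsum_injective
  have heq : f.filter ps = g.filter pt := hinj (by rw [hf, hg])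
  have hzero : f.filter ps = 0 := by
    ext i
    by_cases hi : ps i
    · have h2 : (f.filter ps) i = (g.filter pt) i := by rw [heq]
      have hnt : ¬ pt i := fun ht => hst i hi ht
      simp only [DFinsupp.filter_apply, if_pos hi, if_neg hnt] at h2 ⊢
      simp [h2]
    · simp [DFinsupp.filter_apply, if_neg hi]
  rw [← hf, hzero]
  simp

-- invariance of maxGenEigenspace under commuting maps
lemma aux_comm_mem_maxGen {K V : Type*} [Field K] [AddCommGroup V] [Module K V]
    {f g : Module.End K V} (h : Commute f g) (μ : K) {v : V}
    (hv : v ∈ f.maxGenEigenspace μ) : g v ∈ f.maxGenEigenspace μ := by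
  rw [Module.End.mem_maxGenEigenspace] at hv ⊢
  obtain ⟨k, hk⟩ := hv
  refine ⟨k, ?_⟩
  have hc : Commute (f - μ • 1) g := by
    exact (h.sub_left ((Commute.one_left g).smul_left μ))
  have := (hc.pow_left k)
  calc ((f - μ • 1) ^ k) (g v) = (((f - μ • 1) ^ k) * g) v := rfl
    _ = (g * ((f - μ • 1) ^ k)) v := by rw [this]
    _ = g (((f - μ • 1) ^ k) v) := rfl
    _ = 0 := by rw [hk, map_zero]

-- complex decay
lemma aux_cdecay {n : ℕ} (A : Matrix (Fin n) (Fin n) ℂ) (hA : IsUnit A.det)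
    (μ : ℂ) (hμ : 1 < ‖μ‖) :
    ∀ (k : ℕ) (v : Fin n → ℂ), ((Matrix.toLin' A - μ • 1) ^ k) v = 0 →
      Tendsto (fun m => (A⁻¹ ^ m) *ᵥ v) atTop (𝓝 0) := by
  intro k
  induction k with
  | zero =>
    intro v hv
    simp only [pow_zero, Module.End.one_apply] at hv
    rw [hv]
    simp only [Matrix.mulVec_zero]
    exact tendsto_const_nhds
  | succ k ih =>
    intro v hv
    set w := (Matrix.toLin' A - μ • 1) v with hw
    have hwk : ((Matrix.toLin' A - μ • 1) ^ k) w = 0 := by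
      rw [hw, ← Module.End.mul_apply, ← pow_succ]
      exact hv
    have hy := ih w hwk
    -- A *ᵥ v = μ • v + w
    have hAv : A *ᵥ v = μ • v + w := by
      have h0 : w = A *ᵥ v - μ • v := by
        rw [hw]
        simp only [LinearMap.sub_apply, LinearMap.smul_apply, Module.End.one_apply,
          Matrix.toLin'_apply]
      rw [h0]; abel
    -- recurrence : x m = μ • x (m+1) + y (m+1)
    set x : ℕ → (Fin n → ℂ) := fun m => (A⁻¹ ^ m) *ᵥ v with hx
    set y : ℕ → (Fin n → ℂ) := fun m => (A⁻¹ ^ m) *ᵥ w with hy'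
    have hrec : ∀ m, x m = μ • x (m + 1) + y (m + 1) := by
      intro m
      have h1 : (A⁻¹ ^ (m+1)) *ᵥ (A *ᵥ v) = (A⁻¹ ^ m) *ᵥ v := by
        rw [Matrix.mulVec_mulVec, pow_succ, Matrix.mul_assoc,
          Matrix.nonsing_inv_mul A hA, Matrix.mul_one]
      calc x m = (A⁻¹ ^ (m+1)) *ᵥ (A *ᵥ v) := h1.symm
        _ = (A⁻¹ ^ (m+1)) *ᵥ (μ • v + w) := by rw [hAv]
        _ = μ • x (m + 1) + y (m + 1) := by
            rw [Matrix.mulVec_add, Matrix.mulVec_smul]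
    -- norms
    have hμ0 : (0:ℝ) < ‖μ‖ := by linarith
    have hμne : μ ≠ 0 := by
      intro h; rw [h] at hμ; simp at hμ; linarith
    set r : ℝ := (‖μ‖)⁻¹ with hr
    have hr0 : 0 ≤ r := by positivity
    have hr1 : r < 1 := by
      rw [hr, inv_lt_one_iff₀]; right; exact hμ
    have hnorm : ∀ m, ‖x (m+1)‖ ≤ r * ‖x m‖ + r * ‖y (m+1)‖ := by
      intro m
      have : x (m + 1) = μ⁻¹ • (x m - y (m+1)) := by
        rw [hrec m, add_sub_cancel_right, inv_smul_smul₀ hμne]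
      rw [this, norm_smul]
      have : ‖μ⁻¹‖ = r := by simp [hr]
      rw [this]
      calc r * ‖x m - y (m+1)‖ ≤ r * (‖x m‖ + ‖y (m+1)‖) :=
        mul_le_mul_of_nonneg_left (norm_sub_le _ _) hr0
        _ = r * ‖x m‖ + r * ‖y (m+1)‖ := by ring
    have hbten : Tendsto (fun m => r * ‖y (m+1)‖) atTop (𝓝 0) := by
      have h1 : Tendsto (fun m => y (m+1)) atTop (𝓝 0) := by
        exact (tendsto_add_atTop_iff_nat 1).2 hy
      have := (h1.norm).const_mul r
      simpa using this
    have := aux_real_decay r hr0 hr1 (fun m => ‖x m‖) (fun m => r * ‖y (m+1)‖)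
      (fun m => norm_nonneg _) hnorm hbten
    exact tendsto_zero_iff_norm_tendsto_zero.2 this

def rePartLM {n : ℕ} : (Fin n → ℂ) →ₗ[ℝ] EuclideanSpace ℝ (Fin n) where
  toFun v := WithLp.toLp 2 (fun i => (v i).re)
  map_add' u v := by ext i; simp
  map_smul' c v := by ext i; simp

def imPartLM {n : ℕ} : (Fin n → ℂ) →ₗ[ℝ] EuclideanSpace ℝ (Fin n) where
  toFun v := WithLp.toLp 2 (fun i => (v i).im)
  map_add' u v := by ext i; simp
  map_smul' c v := by ext i; simp

lemma rePartLM_apply {n : ℕ} (v : Fin n → ℂ) (i : Fin n) : (rePartLM v) i = (v i).re := rfl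
lemma imPartLM_apply {n : ℕ} (v : Fin n → ℂ) (i : Fin n) : (imPartLM v) i = (v i).im := rfl

lemma bridge_re {n : ℕ} (P : Matrix (Fin n) (Fin n) ℝ) (v : Fin n → ℂ) :
    Matrix.toEuclideanLin P (rePartLM v) = rePartLM ((P.map (Complex.ofReal)) *ᵥ v) := by
  ext i
  show (P *ᵥ (fun k => (rePartLM v) k)) i = _
  rw [rePartLM_apply]
  simp only [Matrix.mulVec, dotProduct, Matrix.map_apply]
  rw [Complex.re_sum]
  congr 1
  funext k
  rw [rePartLM_apply]
  simp [Complex.mul_re]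

lemma bridge_im {n : ℕ} (P : Matrix (Fin n) (Fin n) ℝ) (v : Fin n → ℂ) :
    Matrix.toEuclideanLin P (imPartLM v) = imPartLM ((P.map (Complex.ofReal)) *ᵥ v) := by
  ext i
  show (P *ᵥ (fun k => (imPartLM v) k)) i = _
  rw [imPartLM_apply]
  simp only [Matrix.mulVec, dotProduct, Matrix.map_apply]
  rw [Complex.im_sum]
  congr 1
  funext k
  rw [imPartLM_apply]
  simp [Complex.mul_im]

-- conjugation
lemma conj_mem_maxGen {n : ℕ} (P : Matrix (Fin n) (Fin n) ℝ) (μ : ℂ) (v : Fin n → ℂ)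
    (hv : v ∈ Module.End.maxGenEigenspace (Matrix.toLin' (P.map (Complex.ofReal))) μ) :
    (fun i => (starRingEnd ℂ) (v i)) ∈
      Module.End.maxGenEigenspace (Matrix.toLin' (P.map (Complex.ofReal))) (starRingEnd ℂ μ) := by
  set f := Matrix.toLin' (P.map (Complex.ofReal)) with hf
  rw [Module.End.mem_maxGenEigenspace] at hv ⊢
  obtain ⟨k, hk⟩ := hv
  refine ⟨k, ?_⟩
  have key : ∀ (u : Fin n → ℂ),
      (f - (starRingEnd ℂ μ) • 1) (fun i => (starRingEnd ℂ) (u i)) =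
        fun i => (starRingEnd ℂ) (((f - μ • 1) u) i) := by
    intro u
    funext i
    simp only [LinearMap.sub_apply, LinearMap.smul_apply, Module.End.one_apply, hf,
      Matrix.toLin'_apply, Pi.sub_apply, Pi.smul_apply, smul_eq_mul]
    rw [map_sub, _root_.map_mul]
    congr 1
    simp only [Matrix.mulVec, dotProduct, Matrix.map_apply]
    rw [map_sum]
    congr 1
    funext l
    rw [_root_.map_mul, Complex.conj_ofReal]
  have iter : ∀ (k : ℕ) (u : Fin n → ℂ),
      ((f - (starRingEnd ℂ μ) • 1) ^ k) (fun i => (starRingEnd ℂ) (u i)) =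
        fun i => (starRingEnd ℂ) ((((f - μ • 1) ^ k) u) i) := by
    intro k
    induction k with
    | zero => intro u; simp
    | succ k ih =>
      intro u
      rw [pow_succ, Module.End.mul_apply, key u, ih ((f - μ • 1) u),
        ← Module.End.mul_apply, ← pow_succ]
  rw [iter k v, hk]
  funext i
  simp
section MainAux
variable {n : ℕ} (M : Matrix (Fin n) (Fin n) ℝ)

lemma aux_Mc_det (hMdet : IsUnit M.det) : IsUnit (M.map (Complex.ofReal)).det := by
  have h : (M.map (Complex.ofReal)).det = ((M.det : ℝ) : ℂ) := by
    rw [show M.map (Complex.ofReal) = Complex.ofRealHom.mapMatrix M from rfl,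
      ← RingHom.map_det]
    rfl
  rw [h, isUnit_iff_ne_zero]
  exact_mod_cast isUnit_iff_ne_zero.1 hMdet

lemma aux_map_inv (hMdet : IsUnit M.det) :
    (M⁻¹).map (Complex.ofReal) = (M.map (Complex.ofReal))⁻¹ := by
  have h : (M.map (Complex.ofReal)) * ((M⁻¹).map (Complex.ofReal)) = 1 := by
    show Complex.ofRealHom.mapMatrix M * Complex.ofRealHom.mapMatrix M⁻¹ = 1
    rw [← _root_.map_mul, Matrix.mul_nonsing_inv M hMdet, _root_.map_one]
  exact (Matrix.inv_eq_right_inv h).symm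

lemma aux_map_pow (P : Matrix (Fin n) (Fin n) ℝ) (m : ℕ) :
    (P ^ m).map (Complex.ofReal) = (P.map (Complex.ofReal)) ^ m := by
  show Complex.ofRealHom.mapMatrix (P ^ m) = (Complex.ofRealHom.mapMatrix P) ^ m
  exact map_pow Complex.ofRealHom.mapMatrix P m

lemma aux_map_inv_pow (hMdet : IsUnit M.det) (m : ℕ) :
    ((M⁻¹ ^ m).map (Complex.ofReal)) = ((M.map (Complex.ofReal))⁻¹) ^ m := by
  rw [aux_map_pow, aux_map_inv M hMdet]

lemma aux_pow_inv_mem_maxGen (hMdet : IsUnit M.det) (μ : ℂ) (m : ℕ) {v : Fin n → ℂ}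
    (hv : v ∈ Module.End.maxGenEigenspace (Matrix.toLin' (M.map (Complex.ofReal))) μ) :
    ((M.map (Complex.ofReal))⁻¹ ^ m) *ᵥ v ∈
      Module.End.maxGenEigenspace (Matrix.toLin' (M.map (Complex.ofReal))) μ := by
  set Mc := M.map (Complex.ofReal) with hMcdef
  have hdetc : IsUnit Mc.det := aux_Mc_det M hMdet
  have hmc : Commute Mc (Mc⁻¹ ^ m) := by
    refine Commute.pow_right ?_ m
    unfold Commute SemiconjBy
    rw [Matrix.mul_nonsing_inv _ hdetc, Matrix.nonsing_inv_mul _ hdetc]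
  have hcomm : Commute (Matrix.toLin' Mc) (Matrix.toLin' (Mc⁻¹ ^ m)) := by
    have := hmc.map (Matrix.toLinAlgEquiv' : Matrix (Fin n) (Fin n) ℂ ≃ₐ[ℂ] _)
    exact this
  have := aux_comm_mem_maxGen hcomm μ hv
  rwa [Matrix.toLin'_apply] at this

lemma aux_invariant (hMdet : IsUnit M.det) (pred : ℂ → Prop) (m : ℕ) :
    ∀ x ∈ genEigSpanReal M pred,
      Matrix.toEuclideanLin (M⁻¹ ^ m) x ∈ genEigSpanReal M pred := by
  intro x hx
  unfold genEigSpanReal at hx ⊢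
  induction hx using Submodule.span_induction with
  | mem x hxs =>
    obtain ⟨μ, hμ, v, hv, hre | him⟩ := hxs
    · have hxv : x = rePartLM v := (WithLp.ext_iff 2).2 (funext fun i => hre i)
      rw [hxv, bridge_re, aux_map_inv_pow M hMdet m]
      exact Submodule.subset_span
        ⟨μ, hμ, _, aux_pow_inv_mem_maxGen M hMdet μ m hv, Or.inl fun i => rfl⟩
    · have hxv : x = imPartLM v := (WithLp.ext_iff 2).2 (funext fun i => him i)
      rw [hxv, bridge_im, aux_map_inv_pow M hMdet m]
      exact Submodule.subset_span
        ⟨μ, hμ, _, aux_pow_inv_mem_maxGen M hMdet μ m hv, Or.inr fun i => rfl⟩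
  | zero => simp only [map_zero]; exact Submodule.zero_mem _
  | add x y hx hy ihx ihy => rw [map_add]; exact Submodule.add_mem _ ihx ihy
  | smul a x hx ih => rw [_root_.map_smul]; exact Submodule.smul_mem _ a ih

lemma aux_decayF (hMdet : IsUnit M.det) :
    ∀ x ∈ genEigSpanReal M (fun μ => 1 < ‖μ‖),
      Tendsto (fun m => Matrix.toEuclideanLin (M⁻¹ ^ m) x) atTop (𝓝 0) := by
  intro x hx
  unfold genEigSpanReal at hx
  induction hx using Submodule.span_induction with
  | mem x hxs =>
    obtain ⟨μ, hμ, v, hv, hre | him⟩ := hxs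
    · have hxv : x = rePartLM v := (WithLp.ext_iff 2).2 (funext fun i => hre i)
      obtain ⟨k, hk⟩ := (Module.End.mem_maxGenEigenspace _ _ _).1 hv
      have hc := aux_cdecay (M.map (Complex.ofReal)) (aux_Mc_det M hMdet) μ hμ k v hk
      have hcont : Continuous (rePartLM (n := n)) :=
        LinearMap.continuous_of_finiteDimensional _
      have h2 := (hcont.tendsto 0).comp hc
      rw [show rePartLM (n := n) 0 = 0 from map_zero _] at h2
      refine h2.congr fun m => ?_
      rw [hxv, bridge_re, aux_map_inv_pow M hMdet m]
      rfl
    · have hxv : x = imPartLM v := (WithLp.ext_iff 2).2 (funext fun i => him i)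
      obtain ⟨k, hk⟩ := (Module.End.mem_maxGenEigenspace _ _ _).1 hv
      have hc := aux_cdecay (M.map (Complex.ofReal)) (aux_Mc_det M hMdet) μ hμ k v hk
      have hcont : Continuous (imPartLM (n := n)) :=
        LinearMap.continuous_of_finiteDimensional _
      have h2 := (hcont.tendsto 0).comp hc
      rw [show imPartLM (n := n) 0 = 0 from map_zero _] at h2
      refine h2.congr fun m => ?_
      rw [hxv, bridge_im, aux_map_inv_pow M hMdet m]
      rfl
  | zero =>
    simp only [map_zero]
    exact tendsto_const_nhds
  | add x y hx hy ihx ihy =>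
    simp only [map_add]
    simpa using ihx.add ihy
  | smul a x hx ih =>
    simp only [_root_.map_smul]
    simpa using ih.const_smul a

end MainAux
def cofLM {n : ℕ} : EuclideanSpace ℝ (Fin n) →ₗ[ℝ] (Fin n → ℂ) where
  toFun x := fun i => ((x i : ℝ) : ℂ)
  map_add' u v := by funext i; simp [PiLp.add_apply, Pi.add_apply]
  map_smul' c v := by
    funext i
    simp [PiLp.smul_apply, Complex.real_smul]

lemma cofLM_apply {n : ℕ} (x : EuclideanSpace ℝ (Fin n)) (i : Fin n) :
    cofLM x i = ((x i : ℝ) : ℂ) := rfl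

section MainAux2
variable {n : ℕ} (M : Matrix (Fin n) (Fin n) ℝ)

lemma aux_le_comap (pred : ℂ → Prop) (hconj : ∀ μ, pred μ → pred (starRingEnd ℂ μ)) :
    ∀ x ∈ genEigSpanReal M pred,
      cofLM x ∈ ⨆ μ, ⨆ (_ : pred μ),
        Module.End.maxGenEigenspace (Matrix.toLin' (M.map (Complex.ofReal))) μ := by
  intro x hx
  set S : Submodule ℂ (Fin n → ℂ) := ⨆ μ, ⨆ (_ : pred μ),
    Module.End.maxGenEigenspace (Matrix.toLin' (M.map (Complex.ofReal))) μ with hS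
  unfold genEigSpanReal at hx
  induction hx using Submodule.span_induction with
  | mem x hxs =>
    obtain ⟨μ, hμ, v, hv, hre | him⟩ := hxs
    · have hv' : (fun i => (starRingEnd ℂ) (v i)) ∈
          Module.End.maxGenEigenspace (Matrix.toLin' (M.map (Complex.ofReal))) (starRingEnd ℂ μ) :=
        conj_mem_maxGen M μ v hv
      have hmem1 : v ∈ S := by
        refine Submodule.mem_iSup_of_mem μ (Submodule.mem_iSup_of_mem hμ hv)
      have hmem2 : (fun i => (starRingEnd ℂ) (v i)) ∈ S :=
        Submodule.mem_iSup_of_mem _ (Submodule.mem_iSup_of_mem (hconj μ hμ) hv')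
      have hx2 : cofLM x = (2⁻¹ : ℂ) • (v + fun i => (starRingEnd ℂ) (v i)) := by
        funext i
        rw [cofLM_apply, hre i]
        simp only [Pi.smul_apply, Pi.add_apply, smul_eq_mul]
        rw [Complex.add_conj]
        push_cast
        ring
      rw [hx2]
      exact S.smul_mem _ (S.add_mem hmem1 hmem2)
    · have hv' : (fun i => (starRingEnd ℂ) (v i)) ∈
          Module.End.maxGenEigenspace (Matrix.toLin' (M.map (Complex.ofReal))) (starRingEnd ℂ μ) :=
        conj_mem_maxGen M μ v hv
      have hmem1 : v ∈ S :=
        Submodule.mem_iSup_of_mem μ (Submodule.mem_iSup_of_mem hμ hv)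
      have hmem2 : (fun i => (starRingEnd ℂ) (v i)) ∈ S :=
        Submodule.mem_iSup_of_mem _ (Submodule.mem_iSup_of_mem (hconj μ hμ) hv')
      have hx2 : cofLM x = ((2 * Complex.I)⁻¹ : ℂ) • (v - fun i => (starRingEnd ℂ) (v i)) := by
        funext i
        rw [cofLM_apply, him i]
        simp only [Pi.smul_apply, Pi.sub_apply, smul_eq_mul]
        rw [Complex.sub_conj]
        field_simp [Complex.I_ne_zero]
        push_cast; ring
      rw [hx2]
      exact S.smul_mem _ (S.sub_mem hmem1 hmem2)
  | zero => rw [map_zero]; exact S.zero_mem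
  | add x y hx hy ihx ihy => rw [map_add]; exact S.add_mem ihx ihy
  | smul a x hx ih =>
    have : cofLM (a • x) = (a : ℂ) • cofLM x := by
      funext i
      simp [cofLM_apply, PiLp.smul_apply, Complex.real_smul]
    rw [this]
    exact S.smul_mem _ ih

lemma aux_EF_disjoint :
    genEigSpanReal M (fun μ => ‖μ‖ ≤ 1) ⊓
      genEigSpanReal M (fun μ => 1 < ‖μ‖) = ⊥ := by
  rw [eq_bot_iff]
  rintro x ⟨h1, h2⟩
  have hc1 := aux_le_comap M (fun μ => ‖μ‖ ≤ 1)
    (fun μ hμ => by simpa using hμ) x h1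
  have hc2 := aux_le_comap M (fun μ => 1 < ‖μ‖)
    (fun μ hμ => by simpa using hμ) x h2
  have hdisj := aux_disjoint_biSup
    (Module.End.independent_maxGenEigenspace (Matrix.toLin' (M.map (Complex.ofReal))))
    (fun μ => ‖μ‖ ≤ 1) (fun μ => 1 < ‖μ‖)
    (fun μ hle hgt => absurd hle (not_le.2 hgt))
  have hzero : cofLM x = 0 := by
    rw [Submodule.disjoint_def] at hdisj
    exact hdisj _ hc1 hc2
  have : ∀ i, x i = 0 := by
    intro i
    have : cofLM x i = 0 := by rw [hzero]; rfl
    rwa [cofLM_apply, Complex.ofReal_eq_zero] at this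
  show x ∈ (⊥ : Submodule ℝ (EuclideanSpace ℝ (Fin n)))
  rw [Submodule.mem_bot]
  ext i
  exact this i

end MainAux2

lemma aux_uniform {n : ℕ} (F : Submodule ℝ (EuclideanSpace ℝ (Fin n)))
    (Tm : ℕ → (EuclideanSpace ℝ (Fin n) →ₗ[ℝ] EuclideanSpace ℝ (Fin n)))
    (hpt : ∀ x ∈ F, Tendsto (fun m => Tm m x) atTop (𝓝 0))
    (ε : ℝ) (hε : 0 < ε) :
    ∃ N : ℕ, ∀ m, N ≤ m → ∀ x ∈ F, ‖Tm m x‖ ≤ ε * ‖x‖ := by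
  classical
  set d := Module.finrank ℝ F with hd
  set b : Module.Basis (Fin d) ℝ F := Module.finBasis ℝ F with hb
  have hcoord : ∀ i : Fin d, ∃ C : ℝ, 0 ≤ C ∧ ∀ y : F, |b.repr y i| ≤ C * ‖y‖ := by
    intro i
    set φ := LinearMap.toContinuousLinearMap (b.coord i) with hφ
    refine ⟨‖φ‖, @norm_nonneg _ _ φ, fun y => ?_⟩
    have := φ.le_opNorm y
    simpa [hφ, Real.norm_eq_abs] using this
  choose C hC0 hC using hcoord
  set Ctot := ∑ i, C i with hCt
  have hCtot0 : 0 ≤ Ctot := Finset.sum_nonneg fun i _ => hC0 i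
  have hδ : 0 < ε / (Ctot + 1) := by positivity
  have hev : ∀ᶠ m in atTop, ∀ i : Fin d,
      ‖Tm m ((b i : F) : EuclideanSpace ℝ (Fin n))‖ ≤ ε / (Ctot + 1) := by
    rw [eventually_all]
    intro i
    have ht := hpt ((b i : F) : EuclideanSpace ℝ (Fin n)) (b i).2
    have hbn : Tendsto (fun m => ‖Tm m ((b i : F) : EuclideanSpace ℝ (Fin n))‖)
        atTop (𝓝 0) := by simpa using ht.norm
    exact (hbn.eventually_lt_const hδ).mono fun m h => h.le
  obtain ⟨N, hN⟩ := eventually_atTop.1 hev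
  refine ⟨N, fun m hm x hx => ?_⟩
  set y : F := ⟨x, hx⟩ with hy
  have hrepr : x = ∑ i, b.repr y i • ((b i : F) : EuclideanSpace ℝ (Fin n)) := by
    have h2 := congrArg (F.subtype) (b.sum_repr y)
    rw [map_sum] at h2
    simp only [_root_.map_smul, Submodule.subtype_apply] at h2
    exact h2.symm
  have hTx : Tm m x = ∑ i, b.repr y i • Tm m ((b i : F) : EuclideanSpace ℝ (Fin n)) := by
    conv_lhs => rw [hrepr]
    rw [map_sum]
    simp [_root_.map_smul]
  have hyx : ‖y‖ = ‖x‖ := rfl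
  have key : Ctot * (ε / (Ctot + 1)) ≤ ε := by
    have h1 : (0:ℝ) < Ctot + 1 := by linarith
    rw [mul_div_assoc'] ; rw [div_le_iff₀ h1]
    nlinarith
  calc ‖Tm m x‖ = ‖∑ i, b.repr y i • Tm m ((b i : F) : EuclideanSpace ℝ (Fin n))‖ := by
        rw [hTx]
    _ ≤ ∑ i, ‖b.repr y i • Tm m ((b i : F) : EuclideanSpace ℝ (Fin n))‖ :=
        norm_sum_le _ _
    _ = ∑ i, |b.repr y i| * ‖Tm m ((b i : F) : EuclideanSpace ℝ (Fin n))‖ := by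
        simp [norm_smul, Real.norm_eq_abs]
    _ ≤ ∑ i, (C i * ‖y‖) * (ε / (Ctot + 1)) := by
        refine Finset.sum_le_sum fun i _ => ?_
        exact mul_le_mul (hC i y) (hN m hm i) (norm_nonneg _)
          (mul_nonneg (hC0 i) (norm_nonneg _))
    _ = (Ctot * (ε / (Ctot + 1))) * ‖x‖ := by
        rw [← Finset.sum_mul, ← Finset.sum_mul, hyx]
        ring
    _ ≤ ε * ‖x‖ := mul_le_mul_of_nonneg_right key (norm_nonneg _)

lemma glAct_mul {n : ℕ} (A C : Matrix.GeneralLinearGroup (Fin n) ℝ)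
    (x : EuclideanSpace ℝ (Fin n)) :
    glAct (A * C) x = glAct A (glAct C x) := by
  unfold glAct
  rw [Units.val_mul]
  apply (WithLp.equiv 2 _).injective
  simp [Matrix.mulVec_mulVec]

lemma glAct_neg_pow {n : ℕ} (B : Matrix.GeneralLinearGroup (Fin n) ℝ) (m : ℕ) :
    glAct (B ^ (-(m:ℤ))) =
      Matrix.toEuclideanLin ((B : Matrix (Fin n) (Fin n) ℝ)⁻¹ ^ m) := by
  have h1 : (B ^ (-(m:ℤ))) = (B⁻¹) ^ m := by
    rw [_root_.zpow_neg, zpow_natCast, ← inv_pow]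
  unfold glAct
  rw [h1]
  congr 1
  rw [Units.val_pow_eq_pow_val, Matrix.coe_units_inv]

/-- If `|det B| > 1`, `F` (resp. `E`) is the real span of generalized eigenspaces for
eigenvalues of modulus `> 1` (resp. `≤ 1`), and `T ⊆ Q(p,q,s)`, then there is `K ∈ ℕ`
such that every orbit `{B^{-j} ξ}_{j∈ℤ}` hits `T` at most `K` times. -/
theorem orbit_hits_Q_boundedly {n : ℕ}
    (B : Matrix.GeneralLinearGroup (Fin n) ℝ)
    (hdet : 1 < |Matrix.det (B : Matrix (Fin n) (Fin n) ℝ)|)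
    (E F : Submodule ℝ (EuclideanSpace ℝ (Fin n)))
    (hE : E = genEigSpanReal (B : Matrix (Fin n) (Fin n) ℝ) (fun μ => ‖μ‖ ≤ 1))
    (hF : F = genEigSpanReal (B : Matrix (Fin n) (Fin n) ℝ) (fun μ => 1 < ‖μ‖))
    (p q s : ℝ) (hp : 0 < p) (hq : 0 < q) (hs : 0 < s)
    (T : Set (EuclideanSpace ℝ (Fin n))) (hT : T ⊆ Qset E F p q s) :
    ∃ K : ℕ, ∀ ξ : EuclideanSpace ℝ (Fin n),
      ({j : ℤ | glAct (B ^ (-j)) ξ ∈ T}).Finite ∧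
      ({j : ℤ | glAct (B ^ (-j)) ξ ∈ T}).ncard ≤ K := by
  classical
  set M : Matrix (Fin n) (Fin n) ℝ := (B : Matrix (Fin n) (Fin n) ℝ) with hMdef
  have hMdet : IsUnit M.det := (Matrix.isUnit_iff_isUnit_det _).1 B.isUnit
  have hdisj : E ⊓ F = ⊥ := by rw [hE, hF]; exact aux_EF_disjoint M
  have hptF : ∀ x ∈ F, Tendsto (fun m => Matrix.toEuclideanLin (M⁻¹ ^ m) x) atTop (𝓝 0) := by
    intro x hx
    rw [hF] at hx
    exact aux_decayF M hMdet x hx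
  have hinvF : ∀ (m : ℕ), ∀ x ∈ F, Matrix.toEuclideanLin (M⁻¹ ^ m) x ∈ F := by
    intro m x hx
    rw [hF] at hx ⊢
    exact aux_invariant M hMdet _ m x hx
  have hinvE : ∀ (m : ℕ), ∀ x ∈ E, Matrix.toEuclideanLin (M⁻¹ ^ m) x ∈ E := by
    intro m x hx
    rw [hE] at hx ⊢
    exact aux_invariant M hMdet _ m x hx
  have hε : 0 < s / (2 * q) := by positivity
  obtain ⟨N, hN⟩ := aux_uniform F (fun m => Matrix.toEuclideanLin (M⁻¹ ^ m)) hptF _ hε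
  refine ⟨2 * N + 1, fun ξ => ?_⟩
  set S := {j : ℤ | glAct (B ^ (-j)) ξ ∈ T} with hSdef
  have gap : ∀ j ∈ S, ∀ j' ∈ S, j < j' → j' - j < (N : ℤ) := by
    intro j hj j' hj' hlt
    by_contra hge
    push_neg at hge
    set m : ℕ := (j' - j).toNat with hmdef
    have hmz : (m : ℤ) = j' - j := Int.toNat_of_nonneg (by omega)
    have hmN : N ≤ m := by
      have : (N : ℤ) ≤ (m : ℤ) := by omega
      exact_mod_cast this
    obtain ⟨e, he, f, hf, hdec, hep, hfs, hfq⟩ := hT hj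
    obtain ⟨e', he', f', hf', hdec', hep', hfs', hfq'⟩ := hT hj'
    have hrel : glAct (B ^ (-j')) ξ = Matrix.toEuclideanLin (M⁻¹ ^ m) (glAct (B ^ (-j)) ξ) := by
      have h1 : B ^ (-j') = B ^ (-(m:ℤ)) * B ^ (-j) := by
        rw [← _root_.zpow_add]
        congr 1
        omega
      rw [h1, glAct_mul, glAct_neg_pow]
    have hfe : e' + f' =
        Matrix.toEuclideanLin (M⁻¹ ^ m) e + Matrix.toEuclideanLin (M⁻¹ ^ m) f := by
      rw [← map_add, ← hdec, ← hrel, ← hdec']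
    have hf'eq : f' = Matrix.toEuclideanLin (M⁻¹ ^ m) f := by
      have h1 : f' - Matrix.toEuclideanLin (M⁻¹ ^ m) f
          = Matrix.toEuclideanLin (M⁻¹ ^ m) e - e' := by
        rw [sub_eq_sub_iff_add_eq_add, add_comm]
        exact hfe
      have hmem1 : f' - Matrix.toEuclideanLin (M⁻¹ ^ m) f ∈ F :=
        F.sub_mem hf' (hinvF m f hf)
      have hmem2 : f' - Matrix.toEuclideanLin (M⁻¹ ^ m) f ∈ E := by
        rw [h1]
        exact E.sub_mem (hinvE m e he) he'
      have hb : f' - Matrix.toEuclideanLin (M⁻¹ ^ m) f ∈ E ⊓ F := ⟨hmem2, hmem1⟩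
      rw [hdisj, Submodule.mem_bot] at hb
      exact sub_eq_zero.1 hb
    have hcontr : ‖f'‖ ≤ s / 2 := by
      rw [hf'eq]
      calc ‖Matrix.toEuclideanLin (M⁻¹ ^ m) f‖ ≤ (s / (2 * q)) * ‖f‖ := hN m hmN f hf
        _ ≤ (s / (2 * q)) * q := mul_le_mul_of_nonneg_left hfq.le hε.le
        _ = s / 2 := by field_simp
    linarith
  rcases Set.eq_empty_or_nonempty S with hSe | ⟨j₀, hj₀⟩
  · rw [hSe]
    exact ⟨Set.finite_empty, by simp⟩
  · have hsub : S ⊆ Set.Icc (j₀ - N) (j₀ + N) := by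
      intro j hj
      rcases lt_trichotomy j j₀ with h | h | h
      · have := gap j hj j₀ hj₀ h
        rw [Set.mem_Icc]
        omega
      · rw [Set.mem_Icc]; omega
      · have := gap j₀ hj₀ j hj h
        rw [Set.mem_Icc]
        omega
    have hfin : S.Finite := (Set.finite_Icc _ _).subset hsub
    refine ⟨hfin, ?_⟩
    calc S.ncard ≤ (Set.Icc (j₀ - N) (j₀ + N)).ncard :=
        Set.ncard_le_ncard hsub (Set.finite_Icc _ _)
      _ = 2 * N + 1 := by
        rw [← Finset.coe_Icc, Set.ncard_coe_finset, Int.card_Icc]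
        omega

end
end

section
/- If the lattice counting estimate holds for a pair (A,Γ) with radius r₀ > 0, then it holds for every radius r > 0 (with a constant depending on r). That is, if ∃C₀ with #(Γ ∩ A^j(B(0,r₀))) ≤ C₀·max(1,|det A|^j) for all j ∈ ℤ, then for every r > 0 there is C(r) with #(Γ ∩ A^j(B(0,r))) ≤ C(r)·max(1,|det A|^j) for all j ∈ ℤ. -/
open Matrix Set

noncomputable section

def IsFullLattice {n : ℕ} (Γ : Set (EuclideanSpace ℝ (Fin n))) : Prop :=
  ∃ b : Module.Basis (Fin n) ℝ (EuclideanSpace ℝ (Fin n)),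
    Γ = ((Submodule.span ℤ (Set.range ⇑b) :
      Submodule ℤ (EuclideanSpace ℝ (Fin n))) : Set (EuclideanSpace ℝ (Fin n)))

private lemma ncard_biUnion_le' {α β : Type*} (t : Finset α) (f : α → Set β) :
    (⋃ x ∈ t, f x).ncard ≤ ∑ x ∈ t, (f x).ncard := by
  classical
  induction t using Finset.induction with
  | empty => simp
  | @insert a s hx ih =>
    rw [Finset.set_biUnion_insert, Finset.sum_insert hx]
    exact le_trans (Set.ncard_union_le _ _) (by omega)

/-- If the lattice counting estimate holds for `(A,Γ)` with some radius `r₀ > 0`, then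
it holds for every radius `r > 0` (with a constant depending on `r`). -/
theorem lattice_counting_radius_independent {n : ℕ}
    (A : Matrix.GeneralLinearGroup (Fin n) ℝ)
    (hdet : 1 < |Matrix.det (A : Matrix (Fin n) (Fin n) ℝ)|)
    (Γ : Set (EuclideanSpace ℝ (Fin n))) (hΓ : IsFullLattice Γ)
    (r₀ : ℝ) (hr₀ : 0 < r₀) (C₀ : ℝ)
    (h : ∀ j : ℤ, ((Γ ∩ glAct (A ^ j) '' Metric.ball 0 r₀).ncard : ℝ) ≤
      C₀ * max 1 (|Matrix.det (A : Matrix (Fin n) (Fin n) ℝ)| ^ j)) :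
    ∀ r > (0 : ℝ), ∃ C : ℝ, ∀ j : ℤ,
      ((Γ ∩ glAct (A ^ j) '' Metric.ball 0 r).ncard : ℝ) ≤
        C * max 1 (|Matrix.det (A : Matrix (Fin n) (Fin n) ℝ)| ^ j) := by
  intro r hr
  obtain ⟨b, hb⟩ := hΓ
  -- `Γ` is a closed discrete subgroup
  have hΓsub : ∀ x ∈ Γ, ∀ y ∈ Γ, x - y ∈ Γ := by
    intro x hx y hy
    rw [hb] at hx hy ⊢
    exact Submodule.sub_mem _ hx hy
  haveI hdisc : DiscreteTopology Γ := by
    rw [hb]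
    exact inferInstanceAs (DiscreteTopology (Submodule.span ℤ (Set.range ⇑b)))
  have hcl : IsClosed Γ := by
    rw [hb]
    exact AddSubgroup.isClosed_of_discrete
      (H := (Submodule.span ℤ (Set.range ⇑b)).toAddSubgroup)
  -- finiteness of intersections with bounded sets
  have hfin : ∀ s : Set (EuclideanSpace ℝ (Fin n)), Bornology.IsBounded s → (Γ ∩ s).Finite := by
    intro s hs
    rw [Set.inter_comm]
    exact Metric.finite_isBounded_inter_isClosed DiscreteTopology.isDiscrete hs hcl
  -- finite subcover of `ball 0 r` by balls of radius `r₀ / 2`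
  obtain ⟨t, ht⟩ : ∃ t : Finset (EuclideanSpace ℝ (Fin n)),
      Metric.ball (0 : EuclideanSpace ℝ (Fin n)) r ⊆ ⋃ x ∈ t, Metric.ball x (r₀ / 2) := by
    obtain ⟨t, ht⟩ := (isCompact_closedBall (0 : EuclideanSpace ℝ (Fin n)) r).elim_finite_subcover
      (fun x : EuclideanSpace ℝ (Fin n) => Metric.ball x (r₀ / 2))
      (fun _ => Metric.isOpen_ball)
      (fun x _ => Set.mem_iUnion.2 ⟨x, Metric.mem_ball_self (by linarith)⟩)
    exact ⟨t, fun x hx => ht (Metric.ball_subset_closedBall hx)⟩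
  refine ⟨(t.card : ℝ) * C₀, fun j => ?_⟩
  set M := glAct (A ^ j) with hM
  have hMbdd : ∀ s : Set (EuclideanSpace ℝ (Fin n)), Bornology.IsBounded s →
      Bornology.IsBounded (M '' s) := by
    intro s hs
    exact (LinearMap.toContinuousLinearMap M).lipschitz.isBounded_image hs
  -- the per-piece estimate
  have hpiece : ∀ x : EuclideanSpace ℝ (Fin n),
      (Γ ∩ M '' Metric.ball x (r₀ / 2)).ncard ≤ (Γ ∩ M '' Metric.ball 0 r₀).ncard := by
    intro x
    rcases (Γ ∩ M '' Metric.ball x (r₀ / 2)).eq_empty_or_nonempty with he | hne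
    · simp [he]
    · obtain ⟨γ₀, hγ₀Γ, u₀, hu₀, hMu₀⟩ := hne
      refine Set.ncard_le_ncard_of_injOn (fun γ => γ - γ₀) ?_ ?_
        (hfin _ (hMbdd _ Metric.isBounded_ball))
      · rintro γ ⟨hγΓ, u, hu, rfl⟩
        refine ⟨hΓsub _ hγΓ _ hγ₀Γ, u - u₀, ?_, ?_⟩
        · rw [Metric.mem_ball, dist_eq_norm, sub_zero, ← dist_eq_norm]
          calc dist u u₀ ≤ dist u x + dist u₀ x := dist_triangle_right _ _ _
            _ < r₀ / 2 + r₀ / 2 := by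
                exact add_lt_add (Metric.mem_ball.1 hu) (Metric.mem_ball.1 hu₀)
            _ = r₀ := by ring
        · rw [map_sub, hMu₀]
      · intro a _ c _ hac
        simpa using hac
  have hcover : Γ ∩ M '' Metric.ball 0 r ⊆
      ⋃ x ∈ t, (Γ ∩ M '' Metric.ball x (r₀ / 2)) := by
    rintro γ ⟨hγΓ, u, hu, rfl⟩
    obtain ⟨x, hx⟩ := Set.mem_iUnion.1 (ht hu)
    obtain ⟨hxt, hux⟩ := Set.mem_iUnion.1 hx
    exact Set.mem_iUnion.2 ⟨x, Set.mem_iUnion.2 ⟨hxt, hγΓ, u, hux, rfl⟩⟩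
  have hfinU : (⋃ x ∈ t, (Γ ∩ M '' Metric.ball x (r₀ / 2))).Finite :=
    Set.Finite.biUnion t.finite_toSet (fun x _ => hfin _ (hMbdd _ Metric.isBounded_ball))
  have hstep : (Γ ∩ M '' Metric.ball 0 r).ncard ≤
      t.card * (Γ ∩ M '' Metric.ball 0 r₀).ncard := by
    calc (Γ ∩ M '' Metric.ball 0 r).ncard
        ≤ (⋃ x ∈ t, (Γ ∩ M '' Metric.ball x (r₀ / 2))).ncard :=
          Set.ncard_le_ncard hcover hfinU
      _ ≤ ∑ x ∈ t, (Γ ∩ M '' Metric.ball x (r₀ / 2)).ncard := ncard_biUnion_le' _ _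
      _ ≤ ∑ _x ∈ t, (Γ ∩ M '' Metric.ball 0 r₀).ncard :=
          Finset.sum_le_sum (fun x _ => hpiece x)
      _ = t.card * (Γ ∩ M '' Metric.ball 0 r₀).ncard := by
          rw [Finset.sum_const, smul_eq_mul]
  calc ((Γ ∩ M '' Metric.ball 0 r).ncard : ℝ)
      ≤ (t.card : ℝ) * ((Γ ∩ M '' Metric.ball 0 r₀).ncard : ℝ) := by
        exact_mod_cast hstep
    _ ≤ (t.card : ℝ) * (C₀ * max 1 (|Matrix.det (A : Matrix (Fin n) (Fin n) ℝ)| ^ j)) := by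
        apply mul_le_mul_of_nonneg_left (h j) (by positivity)
    _ = (t.card : ℝ) * C₀ * max 1 (|Matrix.det (A : Matrix (Fin n) (Fin n) ℝ)| ^ j) := by ring

end
end
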